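/- Fix a real number q and an integer m ≥ 1 with (q)_m = q(q-1)···(q-m+1) ≠ 0. Then for every n ≥ 1, the number of distinct values {P_G(q) : G a simple graph on n+m vertices} is at least the number of distinct values {P_G(q-m) : G a simple graph on n vertices}. -/

import Mathlib

open Polynomial

noncomputable def chromaticPolynomial {V : Type*} [Fintype V] (G : SimpleGraph V) :
    Polynomial ℝ := by
  classical
  exact ∑ A ∈ G.edgeFinset.powerset,
    ((-1 : ℝ) ^ A.card) •
      (X ^ Nat.card (SimpleGraph.fromEdgeSet (↑A : Set (Sym2 V))).ConnectedComponent)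

open Finset

section Aux

open scoped Classical

variable {V : Type*} [Fintype V]

/-- f constant on each edge extends over walks -/
lemma walk_const {H : SimpleGraph V} {α : Type*} {f : V → α}
    (hf : ∀ v w, H.Adj v w → f v = f w) {v w : V} (p : H.Walk v w) : f v = f w := by
  induction p with
  | nil => rfl
  | cons h _ ih => exact (hf _ _ h).trans ih

noncomputable def compEquiv (H : SimpleGraph V) (α : Type*) :
    {f : V → α // ∀ v w, H.Adj v w → f v = f w} ≃ (H.ConnectedComponent → α) where
  toFun f := SimpleGraph.ConnectedComponent.lift f.1 (fun _ _ p _ => walk_const f.2 p)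
  invFun g := ⟨fun v => g (H.connectedComponentMk v), fun v w h => by
    simp only []
    rw [SimpleGraph.ConnectedComponent.connectedComponentMk_eq_of_adj h]⟩
  left_inv f := by ext v; simp
  right_inv g := by
    funext c
    induction c using SimpleGraph.ConnectedComponent.ind with
    | _ v => simp

lemma comp_card (H : SimpleGraph V) (k : ℕ) :
    Nat.card {f : V → Fin k // ∀ v w, H.Adj v w → f v = f w} =
      k ^ Nat.card H.ConnectedComponent := by
  rw [Nat.card_congr (compEquiv H (Fin k)), Nat.card_fun, Nat.card_eq_fintype_card,
    Fintype.card_fin]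

end Aux

section Whitney

open scoped Classical

variable {V : Type*} [Fintype V]

/-- monochromatic edges of a coloring -/
noncomputable def monoE (G : SimpleGraph V) {α : Type*} (f : V → α) : Finset (Sym2 V) :=
  G.edgeFinset.filter (fun e => ∀ v w, e = s(v, w) → f v = f w)

lemma monoE_subset {G : SimpleGraph V} {α : Type*} (f : V → α) :
    monoE G f ⊆ G.edgeFinset := by
  rw [monoE]; exact filter_subset _ _

lemma subset_monoE_iff {G : SimpleGraph V} {α : Type*} {f : V → α}
    {A : Finset (Sym2 V)} (hA : A ⊆ G.edgeFinset) :
    (∀ v w, (SimpleGraph.fromEdgeSet (↑A : Set (Sym2 V))).Adj v w → f v = f w) ↔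
      A ⊆ monoE G f := by
  constructor
  · intro h e he
    rw [monoE, mem_filter]
    refine ⟨hA he, fun v w hvw => ?_⟩
    by_cases hne : v = w
    · rw [hne]
    · exact h v w (by rw [SimpleGraph.fromEdgeSet_adj]; exact ⟨by rw [← hvw]; exact he, hne⟩)
  · intro h v w hvw
    rw [SimpleGraph.fromEdgeSet_adj] at hvw
    have := h hvw.1
    rw [monoE, mem_filter] at this
    exact this.2 v w rfl

lemma monoE_empty_iff {G : SimpleGraph V} {α : Type*} {f : V → α} :
    monoE G f = ∅ ↔ ∀ v w, G.Adj v w → f v ≠ f w := by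
  rw [monoE, filter_eq_empty_iff]
  constructor
  · intro h v w hadj hfe
    apply h (show s(v, w) ∈ G.edgeFinset by simpa using hadj)
    intro a b hab
    rcases Sym2.eq_iff.mp hab with ⟨rfl, rfl⟩ | ⟨rfl, rfl⟩
    · exact hfe
    · exact hfe.symm
  · intro h e he
    induction e with
    | _ a b =>
      rw [SimpleGraph.mem_edgeFinset, SimpleGraph.mem_edgeSet] at he
      intro hall
      exact h a b he (hall a b rfl)

lemma sum_ite_card {α : Type*} [Fintype α] (p : α → Prop) [DecidablePred p] :
    (∑ x : α, if p x then (1 : ℝ) else 0) = ((Nat.card {x // p x} : ℕ) : ℝ) := by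
  rw [Finset.sum_boole, Nat.card_eq_fintype_card, Fintype.card_subtype]

lemma eval_chromatic (G : SimpleGraph V) (k : ℕ) :
    (chromaticPolynomial G).eval (k : ℝ) =
      Nat.card {f : V → Fin k // ∀ v w, G.Adj v w → f v ≠ f w} := by
  rw [chromaticPolynomial]
  rw [eval_finset_sum]
  simp only [eval_smul, smul_eq_mul, eval_pow, eval_X]
  have step1 : ∀ A ∈ G.edgeFinset.powerset,
      (-1 : ℝ) ^ A.card * (k : ℝ) ^ Nat.card
          (SimpleGraph.fromEdgeSet (↑A : Set (Sym2 V))).ConnectedComponent =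
        ∑ f : V → Fin k, (-1 : ℝ) ^ A.card * (if A ⊆ monoE G f then 1 else 0) := by
    intro A hA
    rw [mem_powerset] at hA
    rw [← mul_sum]
    congr 1
    rw [sum_ite_card]
    have hcard : Nat.card {f : V → Fin k // A ⊆ monoE G f} = k ^ Nat.card
        (SimpleGraph.fromEdgeSet (↑A : Set (Sym2 V))).ConnectedComponent := by
      rw [← comp_card (SimpleGraph.fromEdgeSet (↑A : Set (Sym2 V))) k]
      exact Nat.card_congr (Equiv.subtypeEquivRight fun f => (subset_monoE_iff hA).symm)
    rw [hcard, Nat.cast_pow]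
  rw [Finset.sum_congr rfl step1, Finset.sum_comm]
  have step2 : ∀ f : V → Fin k,
      (∑ A ∈ G.edgeFinset.powerset, (-1 : ℝ) ^ A.card * (if A ⊆ monoE G f then 1 else 0)) =
        (if monoE G f = ∅ then 1 else 0) := by
    intro f
    simp only [mul_ite, mul_one, mul_zero, ← Finset.mem_powerset]
    rw [Finset.sum_ite_mem, Finset.inter_eq_right.mpr
      (Finset.powerset_mono.mpr (monoE_subset f))]
    have h0 := Finset.sum_powerset_neg_one_pow_card (x := monoE G f)
    calc (∑ A ∈ (monoE G f).powerset, (-1 : ℝ) ^ A.card)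
        = ((∑ A ∈ (monoE G f).powerset, (-1 : ℤ) ^ A.card : ℤ) : ℝ) := by push_cast; ring_nf
      _ = _ := by rw [h0]; split <;> norm_num
  rw [Finset.sum_congr rfl (fun f _ => step2 f)]
  rw [sum_ite_card]
  norm_cast
  exact Nat.card_congr (Equiv.subtypeEquivRight fun f => monoE_empty_iff)

end Whitney

section Join

open scoped Classical

def joinG {n : ℕ} (G : SimpleGraph (Fin n)) (m : ℕ) : SimpleGraph (Fin n ⊕ Fin m) where
  Adj x y :=
    match x, y with
    | .inl a, .inl b => G.Adj a b
    | .inl _, .inr _ => True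
    | .inr _, .inl _ => True
    | .inr a, .inr b => a ≠ b
  symm := ⟨by
    rintro (a | a) (b | b) h
    · exact G.adj_symm h
    · trivial
    · trivial
    · exact Ne.symm h⟩
  loopless := ⟨by
    rintro (a | a) h
    · exact G.irrefl h
    · exact h rfl⟩

def properCongr {W : Type*} (G : SimpleGraph W) {α β : Type*} (e : α ≃ β) :
    {f : W → α // ∀ v w, G.Adj v w → f v ≠ f w} ≃
      {f : W → β // ∀ v w, G.Adj v w → f v ≠ f w} where
  toFun f := ⟨fun v => e (f.1 v), fun v w h hc => f.2 v w h (e.injective hc)⟩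
  invFun f := ⟨fun v => e.symm (f.1 v), fun v w h hc => f.2 v w h (e.symm.injective hc)⟩
  left_inv f := by ext v; simp
  right_inv f := by ext v; simp

def properComap {W W' : Type*} (e : W ≃ W') (G : SimpleGraph W') (α : Type*) :
    {f : W → α // ∀ v w, (G.comap e).Adj v w → f v ≠ f w} ≃
      {f : W' → α // ∀ v w, G.Adj v w → f v ≠ f w} where
  toFun f := ⟨fun v => f.1 (e.symm v), fun v w h => f.2 _ _ (by simpa using h)⟩
  invFun f := ⟨fun v => f.1 (e v), fun v w h => f.2 _ _ h⟩
  left_inv f := by ext v; simp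
  right_inv f := by ext v; simp

def joinColorEquiv {n : ℕ} (G : SimpleGraph (Fin n)) (m k : ℕ) :
    {f : Fin n ⊕ Fin m → Fin k // ∀ v w, (joinG G m).Adj v w → f v ≠ f w} ≃
      Σ g : Fin m ↪ Fin k,
        {h : Fin n → {c : Fin k // c ∉ Set.range ⇑g} // ∀ v w, G.Adj v w → h v ≠ h w} where
  toFun f :=
    ⟨⟨fun j => f.1 (.inr j), fun j j' hjj => by
        by_contra hne
        exact f.2 (.inr j) (.inr j') hne hjj⟩,
      ⟨fun v => ⟨f.1 (.inl v), by
          rintro ⟨j, hj⟩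
          exact f.2 (.inl v) (.inr j) trivial hj.symm⟩,
        fun v w hadj hc => f.2 (.inl v) (.inl w) hadj (congrArg Subtype.val hc)⟩⟩
  invFun gh :=
    ⟨fun x => Sum.elim (fun v => (gh.2.1 v).1) (fun j => gh.1 j) x, by
      rintro (v | v) (w | w) hadj hc
      · exact gh.2.2 v w hadj (Subtype.ext hc)
      · exact (gh.2.1 v).2 ⟨w, hc.symm⟩
      · exact (gh.2.1 w).2 ⟨v, hc⟩
      · exact hadj (gh.1.injective hc)⟩
  left_inv f := Subtype.ext (funext fun x => by cases x <;> rfl)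
  right_inv gh := rfl

lemma count_fiber {n : ℕ} (G : SimpleGraph (Fin n)) {m k : ℕ} (hk : m ≤ k)
    (g : Fin m ↪ Fin k) :
    Nat.card {h : Fin n → {c : Fin k // c ∉ Set.range ⇑g} // ∀ v w, G.Adj v w → h v ≠ h w} =
      Nat.card {h : Fin n → Fin (k - m) // ∀ v w, G.Adj v w → h v ≠ h w} := by
  have h1 : Fintype.card {c : Fin k // c ∈ Set.range ⇑g} = m :=
    (Fintype.card_congr (Equiv.ofInjective ⇑g g.injective)).symm.trans (Fintype.card_fin m)
  have h2 : Fintype.card {c : Fin k // c ∉ Set.range ⇑g} = k - m := by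
    rw [Fintype.card_subtype_compl, h1, Fintype.card_fin]
  exact Nat.card_congr (properCongr G (Fintype.equivFinOfCardEq h2))

lemma count_join {n : ℕ} (G : SimpleGraph (Fin n)) {m k : ℕ} (hk : m ≤ k) :
    Nat.card {f : Fin n ⊕ Fin m → Fin k // ∀ v w, (joinG G m).Adj v w → f v ≠ f w} =
      k.descFactorial m *
        Nat.card {h : Fin n → Fin (k - m) // ∀ v w, G.Adj v w → h v ≠ h w} := by
  rw [Nat.card_congr (joinColorEquiv G m k)]
  rw [Nat.card_eq_fintype_card, Fintype.card_sigma]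
  have : ∀ g : Fin m ↪ Fin k,
      Fintype.card {h : Fin n → {c : Fin k // c ∉ Set.range ⇑g} //
          ∀ v w, G.Adj v w → h v ≠ h w} =
        Nat.card {h : Fin n → Fin (k - m) // ∀ v w, G.Adj v w → h v ≠ h w} := by
    intro g
    rw [← Nat.card_eq_fintype_card]
    exact count_fiber G hk g
  rw [Finset.sum_congr rfl fun g _ => this g, Finset.sum_const, Finset.card_univ,
    Fintype.card_embedding_eq, Fintype.card_fin, Fintype.card_fin, smul_eq_mul]

end Join

section Main

open scoped Classical

lemma chromatic_join {n m : ℕ} (G : SimpleGraph (Fin n)) :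
    chromaticPolynomial ((joinG G m).comap ⇑finSumFinEquiv.symm) =
      (∏ i ∈ Finset.range m, (X - C (i : ℝ))) *
        (chromaticPolynomial G).comp (X - C (m : ℝ)) := by
  apply Polynomial.eq_of_infinite_eval_eq
  apply Set.infinite_of_injective_forall_mem (f := fun j : ℕ => ((j + m : ℕ) : ℝ))
  · intro a b hab
    simpa using hab
  · intro j
    set k := j + m with hkdef
    have hk : m ≤ k := Nat.le_add_left m j
    simp only [Set.mem_setOf_eq]
    rw [eval_chromatic, Nat.card_congr (properComap finSumFinEquiv.symm (joinG G m) (Fin k)),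
      count_join G hk]
    rw [eval_mul, eval_comp, eval_sub, eval_X, eval_C, eval_prod]
    have hc : ((k : ℝ)) - (m : ℝ) = ((k - m : ℕ) : ℝ) := by
      rw [Nat.cast_sub hk]
    rw [hc, eval_chromatic]
    have hp : (∏ i ∈ Finset.range m, ((X : ℝ[X]) - C (i : ℝ)).eval (k : ℝ)) =
        (k.descFactorial m : ℝ) := by
      rw [Nat.descFactorial_eq_prod_range, Nat.cast_prod]
      refine Finset.prod_congr rfl fun i hi => ?_
      rw [Finset.mem_range] at hi
      rw [eval_sub, eval_X, eval_C, Nat.cast_sub (hi.le.trans hk)]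
    rw [hp]
    push_cast
    ring

end Main

/-- if `(q)_m ≠ 0`, then the number of values of `P_G(q)` on graphs with
`n + m` vertices is at least the number of values of `P_G(q - m)` on graphs with
`n` vertices. -/
theorem card_spectrum_shift (q : ℝ) (m n : ℕ) (hm : 1 ≤ m) (hn : 1 ≤ n)
    (hq : ∏ i ∈ Finset.range m, (q - (i : ℝ)) ≠ 0) :
    {y : ℝ | ∃ G : SimpleGraph (Fin n),
        y = (chromaticPolynomial G).eval (q - (m : ℝ))}.ncard ≤
      {y : ℝ | ∃ G : SimpleGraph (Fin (n + m)),
        y = (chromaticPolynomial G).eval q}.ncard := by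
  classical
  set c := ∏ i ∈ Finset.range m, (q - (i : ℝ)) with hc
  set S1 := {y : ℝ | ∃ G : SimpleGraph (Fin n),
      y = (chromaticPolynomial G).eval (q - (m : ℝ))} with hS1
  set S2 := {y : ℝ | ∃ G : SimpleGraph (Fin (n + m)),
      y = (chromaticPolynomial G).eval q} with hS2
  have key : ∀ G : SimpleGraph (Fin n), ∃ H : SimpleGraph (Fin (n + m)),
      (chromaticPolynomial H).eval q = c * (chromaticPolynomial G).eval (q - (m : ℝ)) := by
    intro G
    refine ⟨(joinG G m).comap ⇑finSumFinEquiv.symm, ?_⟩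
    rw [chromatic_join G, eval_mul, eval_comp, eval_sub, eval_X, eval_C, eval_prod]
    congr 1
    exact Finset.prod_congr rfl fun i _ => by rw [eval_sub, eval_X, eval_C]
  have hinj : Function.Injective (fun y : ℝ => c * y) := fun a b hab =>
    mul_left_cancel₀ hq hab
  have himg : (fun y : ℝ => c * y) '' S1 ⊆ S2 := by
    rintro z ⟨y, ⟨G, rfl⟩, rfl⟩
    obtain ⟨H, hH⟩ := key G
    exact ⟨H, hH.symm⟩
  have hfin : S2.Finite := by
    apply Set.Finite.subset
      (Set.finite_range fun H : SimpleGraph (Fin (n + m)) => (chromaticPolynomial H).eval q)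
    rintro y ⟨H, rfl⟩
    exact Set.mem_range_self H
  calc S1.ncard = ((fun y : ℝ => c * y) '' S1).ncard :=
        (Set.ncard_image_of_injective _ hinj).symm
    _ ≤ S2.ncard := Set.ncard_le_ncard himg hfin
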